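/- Let (x,z) be a feasible solution to Forest-BCR and let v be a terminal, i.e., v ∈ P for some P ∈ 𝒫. Then ∑_{r∈V} ( ∑_{e∈δ⁺({v})} x^{r}_e + ∑_{e∈δ⁻({v})} x^{r}_e ) ≥ 1. -/
import Mathlib


open Finset

noncomputable section

variable {V : Type*}

/-- The set of terminals: vertices occurring in some pair of `P`. -/
def terminals [Fintype V] [DecidableEq V] (P : Finset (Finset V)) : Finset V :=
  Finset.univ.filter fun v => ∃ p ∈ P, v ∈ p

/-- Feasibility for the Forest-BCR linear program: `x r u v` is the value of the
variable `x^r_{(u,v)}` and `z r p` is the value of `z^r_P`. -/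
def ForestBCRFeasible [Fintype V] [DecidableEq V] (P : Finset (Finset V))
    (x : V → V → V → ℝ) (z : V → Finset V → ℝ) : Prop :=
  (∀ r u v : V, u ≠ v → 0 ≤ x r u v) ∧
  (∀ r : V, ∀ p ∈ P, 0 ≤ z r p) ∧
  (∀ p ∈ P, ∑ r : V, z r p = 1) ∧
  (∀ r : V, ∀ p ∈ P, ∀ U : Finset V, r ∉ U → (p ∩ U).Nonempty →
    z r p ≤ ∑ u ∈ U, ∑ v ∈ Uᶜ, x r u v)

/-- The cost `c(x)` of a Forest-BCR solution. -/
def bcrCost [Fintype V] [DecidableEq V] (c : V → V → ℝ) (x : V → V → V → ℝ) : ℝ :=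
  ∑ r : V, ∑ u : V, ∑ v ∈ Finset.univ.erase u, c u v * x r u v

/-- Half-integrality of a Forest-BCR solution. -/
def HalfIntegralSol [Fintype V] [DecidableEq V] (P : Finset (Finset V))
    (x : V → V → V → ℝ) (z : V → Finset V → ℝ) : Prop :=
  (∀ r u v : V, u ≠ v → ∃ n : ℤ, x r u v = n / 2) ∧
  (∀ r : V, ∀ p ∈ P, ∃ n : ℤ, z r p = n / 2)

/-- The solution `x` is supported on the graph `G`. -/
def SupportedOn (G : SimpleGraph V) (x : V → V → V → ℝ) : Prop :=
  ∀ r u v : V, u ≠ v → ¬ G.Adj u v → x r u v = 0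

/-- In a feasible Forest-BCR solution, the total `x`-value of edges
incident to any terminal `v` is at least `1`. -/
theorem terminal_degree_at_least_one [Fintype V] [DecidableEq V]
    (P : Finset (Finset V)) (hP : ∀ p ∈ P, p.card = 2)
    (x : V → V → V → ℝ) (z : V → Finset V → ℝ)
    (hfeas : ForestBCRFeasible P x z)
    (v : V) (hv : ∃ p ∈ P, v ∈ p) :
    1 ≤ ∑ r : V, ((∑ w ∈ Finset.univ.erase v, x r v w) +
      ∑ w ∈ Finset.univ.erase v, x r w v) := by
  obtain ⟨p, hpP, hvp⟩ := hv
  obtain ⟨hxpos, hzpos, hzsum, hcut⟩ := hfeas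
  have hout : ∀ r, 0 ≤ ∑ w ∈ Finset.univ.erase v, x r v w := fun r =>
    Finset.sum_nonneg fun w hw => hxpos r v w (Ne.symm (Finset.mem_erase.1 hw).1)
  have hin : ∀ r, 0 ≤ ∑ w ∈ Finset.univ.erase v, x r w v := fun r =>
    Finset.sum_nonneg fun w hw => hxpos r w v (Finset.mem_erase.1 hw).1
  calc 1 = ∑ r : V, z r p := (hzsum p hpP).symm
    _ ≤ _ := by
      apply Finset.sum_le_sum
      intro r _
      by_cases hr : r = v
      · rw [hr]
        -- use cut U = univ.erase v, incoming edges
        have hne : (p ∩ Finset.univ.erase v).Nonempty := by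
          have : (p.erase v).Nonempty := by
            rw [← Finset.card_pos, Finset.card_erase_of_mem hvp, hP p hpP]
            norm_num
          obtain ⟨w, hw⟩ := this
          exact ⟨w, Finset.mem_inter.2 ⟨Finset.mem_of_mem_erase hw,
            Finset.mem_erase.2 ⟨(Finset.mem_erase.1 hw).1, Finset.mem_univ w⟩⟩⟩
        have h := hcut v p hpP (Finset.univ.erase v)
          (fun h => (Finset.mem_erase.1 h).1 rfl) hne
        rw [← Finset.compl_singleton, compl_compl] at h
        simp only [Finset.sum_singleton, Finset.compl_singleton] at h
        exact le_add_of_nonneg_of_le (hout v) h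
      · -- use cut U = {v}, outgoing edges
        have h := hcut r p hpP {v} (by simp [hr]) ⟨v, Finset.mem_inter.2 ⟨hvp, Finset.mem_singleton_self v⟩⟩
        rw [Finset.sum_singleton, Finset.compl_singleton] at h
        exact le_add_of_le_of_nonneg h (hin r)
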